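/- Let T be maximally monotone, h, h' ∈ H(T), and E = L^h, E' = L^{h'} the associated enlargements, where L^g(ε,x) := {x* : g(x,x*) ≤ ⟨x,x*⟩ + ε}. Then E and E' are mutually additive (i.e., ⟨x-y, x*-y*⟩ ≥ -(ε+η) whenever x* ∈ E(ε,x), y* ∈ E'(η,y)) if and only if h* ∘ i ≤ h'. -/

import Mathlib

open NormedSpace

noncomputable section

/-- Convexity for extended-real-valued functions. -/
def EConvexOn {E : Type*} [AddCommMonoid E] [Module ℝ E] (f : E → EReal) : Prop :=
  ∀ x y : E, ∀ a b : ℝ, 0 ≤ a → 0 ≤ b → a + b = 1 →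
    f (a • x + b • y) ≤ (a : EReal) * f x + (b : EReal) * f y

/-- Properness: somewhere finite and never `⊥` (i.e. values in `ℝ ∪ {+∞}`). -/
def EProper {E : Type*} (f : E → EReal) : Prop :=
  (∃ x, f x ≠ ⊤) ∧ ∀ x, f x ≠ ⊥

variable {X : Type*} [NormedAddCommGroup X] [NormedSpace ℝ X]

/-- The ε-subdifferential of `f : X → ℝ ∪ {+∞}` at `x`. -/
def epsSubdiff (f : X → EReal) (ε : ℝ) (x : X) : Set (StrongDual ℝ X) :=
  {p | f x ≠ ⊤ ∧ ∀ y : X, f x + ((p (y - x) : ℝ) : EReal) ≤ f y + (ε : EReal)}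

/-- The Fenchel conjugate of `f : X → ℝ ∪ {+∞}`. -/
def fconj (f : X → EReal) (p : StrongDual ℝ X) : EReal :=
  ⨆ y : X, ((p y : ℝ) : EReal) - f y

/-- The duality pairing `⟨x, x*⟩` on `X × X*`. -/
def pairing (z : X × StrongDual ℝ X) : ℝ := z.2 z.1

/-- `h* ∘ i`, the conjugate of `h : X × X* → ℝ ∪ {+∞}` with respect to the pairing
`⟨(x,x*),(y*,y)⟩ = ⟨x,y*⟩ + ⟨y,x*⟩`, composed with the swap `i(x,x*) = (x*,x)`. -/
def conjI (h : X × StrongDual ℝ X → EReal) (z : X × StrongDual ℝ X) : EReal :=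
  ⨆ w : X × StrongDual ℝ X, ((z.2 w.1 + w.2 z.1 : ℝ) : EReal) - h w

/-- The averaging map `A h := (1/2)(h + h* ∘ i)`. -/
def Amap (h : X × StrongDual ℝ X → EReal) : X × StrongDual ℝ X → EReal :=
  fun z => (((1 : ℝ)/2 : ℝ) : EReal) * (h z + conjI h z)

/-- Monotone multivalued operator `T : X ⇉ X*`. -/
def IsMonotoneOp (T : X → Set (StrongDual ℝ X)) : Prop :=
  ∀ ⦃x p y q⦄, p ∈ T x → q ∈ T y → 0 ≤ (p - q) (x - y)

/-- Maximally monotone operator. -/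
def IsMaxMonotoneOp (T : X → Set (StrongDual ℝ X)) : Prop :=
  IsMonotoneOp T ∧ ∀ x p, (∀ y q, q ∈ T y → 0 ≤ (p - q) (x - y)) → p ∈ T x

/-- The Fitzpatrick family `H(T)`: lsc convex `h ≥ ⟨·,·⟩` with equality on `gph T`. -/
def InFitzFamily (T : X → Set (StrongDual ℝ X)) (h : X × StrongDual ℝ X → EReal) : Prop :=
  LowerSemicontinuous h ∧ EConvexOn h ∧ (∀ z, (pairing z : EReal) ≤ h z) ∧
    ∀ x p, p ∈ T x → h (x, p) = (pairing (x, p) : EReal)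

/-- The δ-subdifferential of `h : X × X* → ℝ ∪ {+∞}` with respect to the pairing
`⟨(x,x*),(y*,y)⟩ = ⟨x,y*⟩ + ⟨y,x*⟩`. -/
def epsSubdiff2 (h : X × StrongDual ℝ X → EReal) (δ : ℝ) (z : X × StrongDual ℝ X) :
    Set (StrongDual ℝ X × X) :=
  {w | h z ≠ ⊤ ∧ ∀ u : X × StrongDual ℝ X,
    h z + ((w.1 (u.1 - z.1) + (u.2 - z.2) w.2 : ℝ) : EReal) ≤ h u + (δ : EReal)}

/-- The Fenchel–Young function `f^{FY}(x,x*) = f(x) + f*(x*)`. -/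
def FYfn (f : X → EReal) (z : X × StrongDual ℝ X) : EReal := f z.1 + fconj f z.2

/-- The enlargement `L^g(ε,x) := {x* : g(x,x*) ≤ ⟨x,x*⟩ + ε}` associated with a
convex representation `g`. -/
def Lenl (g : X × StrongDual ℝ X → EReal) (ε : ℝ) (x : X) : Set (StrongDual ℝ X) :=
  {p | g (x, p) ≤ ((p x + ε : ℝ) : EReal)}

/-- `L^h` and `L^{h'}` are mutually additive iff `h* ∘ i ≤ h'`. -/
theorem statement16 (T : X → Set (StrongDual ℝ X)) (hT : IsMaxMonotoneOp T)
    (h h' : X × StrongDual ℝ X → EReal)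
    (hF : InFitzFamily T h) (hF' : InFitzFamily T h')
    (hp : EProper h) (hp' : EProper h') :
    (∀ ε η : ℝ, 0 ≤ ε → 0 ≤ η → ∀ x y : X, ∀ p q : StrongDual ℝ X,
        p ∈ Lenl h ε x → q ∈ Lenl h' η y →
          -(ε + η) ≤ (p - q) (x - y)) ↔
      ∀ z, conjI h z ≤ h' z := by
  constructor
  · intro hadd z
    obtain ⟨y, q⟩ := z
    refine iSup_le fun w => ?_
    obtain ⟨x, p⟩ := w
    by_cases hT1 : h (x, p) = ⊤
    · simp [hT1]
    by_cases hT2 : h' (y, q) = ⊤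
    · simp [hT2]
    have ha : ((h (x, p)).toReal : EReal) = h (x, p) :=
      EReal.coe_toReal hT1 (hp.2 _)
    have hb : ((h' (y, q)).toReal : EReal) = h' (y, q) :=
      EReal.coe_toReal hT2 (hp'.2 _)
    set a := (h (x, p)).toReal with haa
    set b := (h' (y, q)).toReal with hbb
    have hpa : p x ≤ a := by
      have := hF.2.2.1 (x, p)
      rw [← ha] at this
      exact_mod_cast this
    have hqb : q y ≤ b := by
      have := hF'.2.2.1 (y, q)
      rw [← hb] at this
      exact_mod_cast this
    have hmemP : p ∈ Lenl h (a - p x) x := by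
      show h (x, p) ≤ ((p x + (a - p x) : ℝ) : EReal)
      rw [← ha]
      exact_mod_cast le_of_eq (by ring)
    have hmemQ : q ∈ Lenl h' (b - q y) y := by
      show h' (y, q) ≤ ((q y + (b - q y) : ℝ) : EReal)
      rw [← hb]
      exact_mod_cast le_of_eq (by ring)
    have key := hadd (a - p x) (b - q y) (by linarith) (by linarith) x y p q hmemP hmemQ
    simp only [ContinuousLinearMap.sub_apply, map_sub] at key
    show ((q x + p y : ℝ) : EReal) - h (x, p) ≤ h' (y, q)
    rw [← ha, ← hb, ← EReal.coe_sub, EReal.coe_le_coe_iff]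
    linarith
  · intro hle ε η hε hη x y p q hP hQ
    have hP' : h (x, p) ≤ ((p x + ε : ℝ) : EReal) := hP
    have hQ' : h' (y, q) ≤ ((q y + η : ℝ) : EReal) := hQ
    have hT1 : h (x, p) ≠ ⊤ := by
      intro h0
      rw [h0, top_le_iff] at hP'
      exact EReal.coe_ne_top _ hP'
    have ha : ((h (x, p)).toReal : EReal) = h (x, p) :=
      EReal.coe_toReal hT1 (hp.2 _)
    set a := (h (x, p)).toReal with haa
    have hpa : p x ≤ a := by
      have := hF.2.2.1 (x, p)
      rw [← ha] at this
      exact_mod_cast this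
    have hax : a ≤ p x + ε := by
      rw [← ha] at hP'
      exact_mod_cast hP'
    have hkey : ((q x + p y : ℝ) : EReal) - h (x, p) ≤ h' (y, q) := by
      have := le_iSup (fun w : X × StrongDual ℝ X =>
        (((y, q).2 w.1 + w.2 (y, q).1 : ℝ) : EReal) - h w) (x, p)
      exact this.trans (hle (y, q))
    rw [← ha, ← EReal.coe_sub] at hkey
    have hkey2 : (q x + p y) - a ≤ q y + η := by
      exact_mod_cast hkey.trans hQ'
    simp only [ContinuousLinearMap.sub_apply, map_sub]
    linarith
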